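/- If θ is a B-action, then for every ε > 0 there exists δ > 0 such that θ(s,t) < ε whenever 0 ≤ s < δ and 0 ≤ t < δ; consequently, the sets {(x,y) : d(x,y) < ε} form a base of a separated uniformity on any θ-metric space (X, d, θ). -/
import Mathlib


/-- For a B-action θ, θ(s,t) is small when s,t are small; consequently the sets
{(x,y) : d(x,y) < ε} form a base of a separated uniformity on a θ-metric space. -/
theorem thetaMetric_uniformity_base {X : Type*} [Nonempty X] (θ : ℝ → ℝ → ℝ)
    (hc1 : ∀ t ≥ (0:ℝ), ContinuousOn (fun s => θ s t) (Set.Ici 0))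
    (hc2 : ∀ s ≥ (0:ℝ), ContinuousOn (fun t => θ s t) (Set.Ici 0))
    (hnn : ∀ s t, 0 ≤ s → 0 ≤ t → 0 ≤ θ s t)
    (h00 : θ 0 0 = 0)
    (hsymm : ∀ s t, 0 ≤ s → 0 ≤ t → θ s t = θ t s)
    (hmono : ∀ x y s t, 0 ≤ x → 0 ≤ y → 0 ≤ s → 0 ≤ t →
      ((x ≤ s ∧ y < t) ∨ (x < s ∧ y ≤ t)) → θ x y < θ s t)
    (hle : ∀ s > (0:ℝ), θ s 0 ≤ s)
    (d : X → X → ℝ)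
    (hdnn : ∀ x y, 0 ≤ d x y)
    (hd0 : ∀ x y, d x y = 0 ↔ x = y)
    (hdsymm : ∀ x y, d x y = d y x)
    (hdtri : ∀ x y z, d x z ≤ θ (d x y) (d y z)) :
    (∀ ε > (0:ℝ), ∃ δ > (0:ℝ), ∀ s t : ℝ, 0 ≤ s → 0 ≤ t → s < δ → t < δ → θ s t < ε) ∧
    (∀ ε > (0:ℝ), ∀ x : X, d x x < ε) ∧
    (∀ ε > (0:ℝ), ∃ δ > (0:ℝ), ∀ x y z : X, d x y < δ → d y z < δ → d x z < ε) ∧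
    ⋂₀ {s : Set (X × X) |
        s ∈ ⨅ ε ∈ Set.Ioi (0:ℝ), Filter.principal {p : X × X | d p.1 p.2 < ε}}
      = {p : X × X | p.1 = p.2} := by
  have key : ∀ ε > (0:ℝ), ∃ δ > (0:ℝ), ∀ s t : ℝ, 0 ≤ s → 0 ≤ t → s < δ → t < δ → θ s t < ε := by
    intro ε hε
    have h1 : Filter.Tendsto (fun t => θ 0 t) (nhdsWithin 0 (Set.Ici 0)) (nhds 0) := by
      have := (hc2 0 le_rfl) 0 Set.self_mem_Ici
      simpa [ContinuousWithinAt, h00] using this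
    have h1' : ∀ᶠ t in nhdsWithin 0 (Set.Ici 0), θ 0 t < ε :=
      h1.eventually (Filter.Tendsto.eventually_lt_const hε Filter.tendsto_id)
    rw [Filter.eventually_iff, Metric.mem_nhdsWithin_iff] at h1'
    obtain ⟨δ₁, hδ₁, hball₁⟩ := h1'
    set t₀ : ℝ := δ₁ / 2 with ht₀def
    have ht₀pos : 0 < t₀ := by positivity
    have ht₀ : θ 0 t₀ < ε := hball₁ ⟨by simp [Real.dist_eq, abs_of_nonneg ht₀pos.le]; linarith, ht₀pos.le⟩
    have h2 : Filter.Tendsto (fun s => θ s t₀) (nhdsWithin 0 (Set.Ici 0)) (nhds (θ 0 t₀)) := by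
      have := (hc1 t₀ ht₀pos.le) 0 Set.self_mem_Ici
      simpa [ContinuousWithinAt] using this
    have h2' : ∀ᶠ s in nhdsWithin 0 (Set.Ici 0), θ s t₀ < ε :=
      h2.eventually (Filter.Tendsto.eventually_lt_const ht₀ Filter.tendsto_id)
    rw [Filter.eventually_iff, Metric.mem_nhdsWithin_iff] at h2'
    obtain ⟨δ₂, hδ₂, hball₂⟩ := h2'
    refine ⟨min δ₂ t₀, lt_min hδ₂ ht₀pos, fun s t hs ht hsδ htδ => ?_⟩
    have hst₀ : θ s t₀ < ε := hball₂ ⟨by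
      simp [Real.dist_eq, abs_of_nonneg hs]
      exact lt_of_lt_of_le hsδ (min_le_left _ _), hs⟩
    have : θ s t < θ s t₀ :=
      hmono s t s t₀ hs ht hs ht₀pos.le
        (Or.inl ⟨le_refl s, lt_of_lt_of_le htδ (min_le_right _ _)⟩)
    linarith
  refine ⟨key, ?_, ?_, ?_⟩
  · intro ε hε x
    have : d x x = 0 := (hd0 x x).mpr rfl
    linarith
  · intro ε hε
    obtain ⟨δ, hδ, hθ⟩ := key ε hε
    exact ⟨δ, hδ, fun x y z hxy hyz =>
      lt_of_le_of_lt (hdtri x y z) (hθ _ _ (hdnn x y) (hdnn y z) hxy hyz)⟩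
  · ext p
    simp only [Set.mem_sInter, Set.mem_setOf_eq]
    constructor
    · intro hp
      have hall : ∀ ε > (0:ℝ), d p.1 p.2 < ε := by
        intro ε hε
        exact hp _ (Filter.mem_iInf_of_mem ε (Filter.mem_iInf_of_mem hε
          (Filter.mem_principal_self _)))
      have h0 : d p.1 p.2 ≤ 0 := le_of_not_gt fun h => lt_irrefl _ (hall _ h)
      exact (hd0 p.1 p.2).mp (le_antisymm h0 (hdnn _ _))
    · intro hp s hs
      have hle' : Filter.principal {p : X × X | p.1 = p.2} ≤
          ⨅ ε ∈ Set.Ioi (0:ℝ), Filter.principal {p : X × X | d p.1 p.2 < ε} := by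
        refine le_iInf fun ε => le_iInf fun hε => Filter.principal_mono.mpr ?_
        intro q hq
        simp only [Set.mem_setOf_eq] at hq ⊢
        rw [← hd0 q.1 q.2] at hq
        rw [hq]
        exact hε
      exact hle' hs hp
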